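/- Let k = ℤ/2ℤ and let R be the mod-2 coinvariant algebra of S₃ as defined in the context. For the group-algebra elements c₁ = 1 + s₁₂ + s₂₁, c₂ = 1 + s₂ + s₂₁ + s₁₂₁, and c₃ = 1 + s₂ + s₁₂ + s₁₂₁ of k[S₃], the ranges of the induced k-linear endomorphisms of R are: range(T_{c₁}) = span_k{[1], [x₁²x₂]}, range(T_{c₂}) = span_k{[x₂], [x₁² + x₁x₂]}, and range(T_{c₃}) = span_k{[x₁], [x₁²]}. -/

import Mathlib

namespace Stmt2

noncomputable section

abbrev k := ZMod 2

/-- The polynomial ring `P = k[x₁, x₂, x₃]`. -/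
abbrev P := MvPolynomial (Fin 3) k

def x₁ : P := MvPolynomial.X 0
def x₂ : P := MvPolynomial.X 1

/-- The ideal generated by the elementary symmetric polynomials `e₁, e₂, e₃`. -/
def I : Ideal P := Ideal.span
  {MvPolynomial.esymm (Fin 3) k 1, MvPolynomial.esymm (Fin 3) k 2,
    MvPolynomial.esymm (Fin 3) k 3}

/-- The mod-2 coinvariant algebra of `S₃`. -/
abbrev R := P ⧸ I

/-- The quotient map `P → R` as a `k`-linear map. -/
def π : P →ₗ[k] R := (Ideal.Quotient.mkₐ k I).toLinearMap

/-- The action of a permutation `w` on `P` by permuting the variables,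
as a `k`-linear map. -/
def L (w : Equiv.Perm (Fin 3)) : P →ₗ[k] P := (MvPolynomial.rename ⇑w).toLinearMap

def t₁ : Equiv.Perm (Fin 3) := Equiv.swap 0 1
def t₂ : Equiv.Perm (Fin 3) := Equiv.swap 1 2

/-- The linear endomorphism `T_{c₁}` of `P` for `c₁ = 1 + s₁₂ + s₂₁`. -/
def T₁ : P →ₗ[k] P := L 1 + L (t₁ * t₂) + L (t₂ * t₁)

/-- The linear endomorphism `T_{c₂}` of `P` for `c₂ = 1 + s₂ + s₂₁ + s₁₂₁`. -/
def T₂ : P →ₗ[k] P := L 1 + L t₂ + L (t₂ * t₁) + L (t₁ * t₂ * t₁)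

/-- The linear endomorphism `T_{c₃}` of `P` for `c₃ = 1 + s₂ + s₁₂ + s₁₂₁`. -/
def T₃ : P →ₗ[k] P := L 1 + L t₂ + L (t₁ * t₂) + L (t₁ * t₂ * t₁)

open MvPolynomial

lemma h2 : (2 : P) = 0 := by
  have h : ((2:ℕ) : P) = 0 := CharP.cast_eq_zero P 2
  simpa using h

lemma eE1 : esymm (Fin 3) k 1 = X 0 + X 1 + X 2 := by
  simp [esymm_one, Fin.sum_univ_three]

lemma eE2 : esymm (Fin 3) k 2 = X 0 * X 1 + X 0 * X 2 + X 1 * X 2 := by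
  rw [esymm, show Finset.powersetCard 2 (Finset.univ : Finset (Fin 3)) = {{0,1},{0,2},{1,2}} from by decide]
  rw [show ({{0,1},{0,2},{1,2}} : Finset (Finset (Fin 3))) = insert {0,1} (insert {0,2} {{1,2}}) from rfl]
  rw [Finset.sum_insert (by decide), Finset.sum_insert (by decide), Finset.sum_singleton]
  rw [show ({0,1} : Finset (Fin 3)) = insert 0 {1} from rfl, Finset.prod_insert (by decide), Finset.prod_singleton]
  rw [show ({0,2} : Finset (Fin 3)) = insert 0 {2} from rfl, Finset.prod_insert (by decide), Finset.prod_singleton]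
  rw [show ({1,2} : Finset (Fin 3)) = insert 1 {2} from rfl, Finset.prod_insert (by decide), Finset.prod_singleton]
  ring

lemma eE3 : esymm (Fin 3) k 3 = X 0 * X 1 * X 2 := by
  rw [esymm, show Finset.powersetCard 3 (Finset.univ : Finset (Fin 3)) = {{0,1,2}} from by decide]
  rw [Finset.sum_singleton,
    show ({0,1,2} : Finset (Fin 3)) = insert 0 (insert 1 {2}) from rfl,
    Finset.prod_insert (by decide), Finset.prod_insert (by decide), Finset.prod_singleton]
  ring

lemma hg1 : (X 0 + X 1 + X 2 : P) ∈ I := by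
  rw [← eE1]; unfold I; exact Ideal.subset_span (Set.mem_insert _ _)

lemma hg2 : (X 0 * X 1 + X 0 * X 2 + X 1 * X 2 : P) ∈ I := by
  rw [← eE2]; unfold I
  exact Ideal.subset_span (Set.mem_insert_iff.2 (Or.inr (Set.mem_insert _ _)))

lemma hg3 : (X 0 * X 1 * X 2 : P) ∈ I := by
  rw [← eE3]; unfold I
  exact Ideal.subset_span (Set.mem_insert_iff.2 (Or.inr (Set.mem_insert_iff.2 (Or.inr rfl))))

lemma memI (a b c : P) {p : P}
    (h : p = a * (X 0 + X 1 + X 2) + b * (X 0 * X 1 + X 0 * X 2 + X 1 * X 2)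
      + c * (X 0 * X 1 * X 2)) : p ∈ I := by
  rw [h]
  exact add_mem (add_mem (I.mul_mem_left a hg1) (I.mul_mem_left b hg2)) (I.mul_mem_left c hg3)

lemma renameI (w : Equiv.Perm (Fin 3)) {f : P} (hf : f ∈ I) : rename ⇑w f ∈ I := by
  unfold I at hf
  induction hf using Submodule.span_induction with
  | mem x hx =>
      simp only [Set.mem_insert_iff, Set.mem_singleton_iff] at hx
      rcases hx with rfl | rfl | rfl <;>
        · rw [rename_esymm]; unfold I
          exact Ideal.subset_span (by simp)
  | zero => rw [map_zero]; exact I.zero_mem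
  | add x y _ _ hx hy => rw [map_add]; exact I.add_mem hx hy
  | smul a x _ hx => rw [smul_eq_mul, map_mul]; exact I.mul_mem_left _ hx

lemma pi_eq {p q : P} (h : p - q ∈ I) : π p = π q := by
  have h0 : π (p - q) = 0 := by
    simp only [π, AlgHom.toLinearMap_apply, Ideal.Quotient.mkₐ_eq_mk]
    exact (Ideal.Quotient.eq_zero_iff_mem).2 h
  rw [map_sub] at h0
  exact sub_eq_zero.mp h0

lemma TI1 {f : P} (hf : f ∈ I) : T₁ f ∈ I := by
  simp only [T₁, LinearMap.add_apply, L, AlgHom.toLinearMap_apply]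
  exact add_mem (add_mem (by simpa [Equiv.Perm.coe_one] using renameI 1 hf)
    (renameI _ hf)) (renameI _ hf)

lemma TI2 {f : P} (hf : f ∈ I) : T₂ f ∈ I := by
  simp only [T₂, LinearMap.add_apply, L, AlgHom.toLinearMap_apply]
  exact add_mem (add_mem (add_mem (by simpa [Equiv.Perm.coe_one] using renameI 1 hf)
    (renameI _ hf)) (renameI _ hf)) (renameI _ hf)

lemma TI3 {f : P} (hf : f ∈ I) : T₃ f ∈ I := by
  simp only [T₃, LinearMap.add_apply, L, AlgHom.toLinearMap_apply]
  exact add_mem (add_mem (add_mem (by simpa [Equiv.Perm.coe_one] using renameI 1 hf)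
    (renameI _ hf)) (renameI _ hf)) (renameI _ hf)

def Bset : Set P := {1, X 0, X 1, X 0 ^ 2, X 0 * X 1, X 0 ^ 2 * X 1}

def M : Submodule k P := Submodule.span k Bset

lemma hB0 : (1:P) ∈ M := Submodule.subset_span (Set.mem_insert _ _)
lemma hB1 : (X 0 : P) ∈ M := Submodule.subset_span (by right; left; rfl)
lemma hB2 : (X 1 : P) ∈ M := Submodule.subset_span (by right; right; left; rfl)
lemma hB3 : (X 0 ^ 2 : P) ∈ M := Submodule.subset_span (by right; right; right; left; rfl)
lemma hB4 : (X 0 * X 1 : P) ∈ M := Submodule.subset_span (by right; right; right; right; left; rfl)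
lemma hB5 : (X 0 ^ 2 * X 1 : P) ∈ M := Submodule.subset_span (by right; right; right; right; right; rfl)

lemma prod0_0 : ((1:P) * X 0 : P) - (X 0) ∈ I :=
  memI (0) (0) (0) (by linear_combination (0) * h2)

lemma prod0_1 : ((1:P) * X 1 : P) - (X 1) ∈ I :=
  memI (0) (0) (0) (by linear_combination (0) * h2)

lemma prod0_2 : ((1:P) * X 2 : P) - (X 0 + X 1) ∈ I :=
  memI (1) (0) (0) (by linear_combination ((-1) * X 1 + (-1) * X 0) * h2)

lemma prod1_0 : (X 0 * X 0 : P) - (X 0 ^ 2) ∈ I :=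
  memI (0) (0) (0) (by linear_combination (0) * h2)

lemma prod1_1 : (X 0 * X 1 : P) - (X 0 * X 1) ∈ I :=
  memI (0) (0) (0) (by linear_combination (0) * h2)

lemma prod1_2 : (X 0 * X 2 : P) - (X 0 ^ 2 + X 0 * X 1) ∈ I :=
  memI (X 0) (0) (0) (by linear_combination ((-1) * X 0 * X 1 + (-1) * X 0 ^ 2) * h2)

lemma prod2_0 : (X 1 * X 0 : P) - (X 0 * X 1) ∈ I :=
  memI (0) (0) (0) (by linear_combination (0) * h2)

lemma prod2_1 : (X 1 * X 1 : P) - (X 0 ^ 2 + X 0 * X 1) ∈ I :=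
  memI (X 1 + X 0) (1) (0) (by linear_combination ((-1) * X 1 * X 2 + (-1) * X 0 * X 2 + (-2) * X 0 * X 1 + (-1) * X 0 ^ 2) * h2)

lemma prod2_2 : (X 1 * X 2 : P) - (X 0 ^ 2) ∈ I :=
  memI (X 0) (1) (0) (by linear_combination ((-1) * X 0 * X 2 + (-1) * X 0 * X 1 + (-1) * X 0 ^ 2) * h2)

lemma prod3_0 : (X 0 ^ 2 * X 0 : P) - (0) ∈ I :=
  memI (X 0 ^ 2) (X 0) (1) (by linear_combination ((-1) * X 0 * X 1 * X 2 + (-1) * X 0 ^ 2 * X 2 + (-1) * X 0 ^ 2 * X 1) * h2)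

lemma prod3_1 : (X 0 ^ 2 * X 1 : P) - (X 0 ^ 2 * X 1) ∈ I :=
  memI (0) (0) (0) (by linear_combination (0) * h2)

lemma prod3_2 : (X 0 ^ 2 * X 2 : P) - (X 0 ^ 2 * X 1) ∈ I :=
  memI (0) (X 0) (1) (by linear_combination ((-1) * X 0 * X 1 * X 2 + (-1) * X 0 ^ 2 * X 1) * h2)

lemma prod4_0 : (X 0 * X 1 * X 0 : P) - (X 0 ^ 2 * X 1) ∈ I :=
  memI (0) (0) (0) (by linear_combination (0) * h2)

lemma prod4_1 : (X 0 * X 1 * X 1 : P) - (X 0 ^ 2 * X 1) ∈ I :=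
  memI (X 0 * X 1) (0) (1) (by linear_combination ((-1) * X 0 * X 1 * X 2 + (-1) * X 0 ^ 2 * X 1) * h2)

lemma prod4_2 : (X 0 * X 1 * X 2 : P) - (0) ∈ I :=
  memI (0) (0) (1) (by linear_combination (0) * h2)

lemma prod5_0 : (X 0 ^ 2 * X 1 * X 0 : P) - (0) ∈ I :=
  memI (X 0 ^ 2 * X 1) (X 0 * X 1) (X 1) (by linear_combination ((-1) * X 0 * X 1 ^ 2 * X 2 + (-1) * X 0 ^ 2 * X 1 * X 2 + (-1) * X 0 ^ 2 * X 1 ^ 2) * h2)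

lemma prod5_1 : (X 0 ^ 2 * X 1 * X 1 : P) - (0) ∈ I :=
  memI (0) (X 0 * X 1) (X 1 + X 0) (by linear_combination ((-1) * X 0 * X 1 ^ 2 * X 2 + (-1) * X 0 ^ 2 * X 1 * X 2) * h2)

lemma prod5_2 : (X 0 ^ 2 * X 1 * X 2 : P) - (0) ∈ I :=
  memI (0) (0) (X 0) (by linear_combination (0) * h2)

lemma mulX (i : Fin 3) (m : P) (hm : m ∈ M) : ∃ m' ∈ M, m * X i - m' ∈ I := by
  induction hm using Submodule.span_induction with
  | mem x hx =>
      simp only [Bset, Set.mem_insert_iff, Set.mem_singleton_iff] at hx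
      fin_cases i <;> rcases hx with rfl | rfl | rfl | rfl | rfl | rfl
      · exact ⟨X 0, hB1, prod0_0⟩
      · exact ⟨X 0 ^ 2, hB3, prod1_0⟩
      · exact ⟨X 0 * X 1, hB4, prod2_0⟩
      · exact ⟨0, (Submodule.zero_mem M), prod3_0⟩
      · exact ⟨X 0 ^ 2 * X 1, hB5, prod4_0⟩
      · exact ⟨0, (Submodule.zero_mem M), prod5_0⟩
      · exact ⟨X 1, hB2, prod0_1⟩
      · exact ⟨X 0 * X 1, hB4, prod1_1⟩
      · exact ⟨X 0 ^ 2 + X 0 * X 1, (add_mem hB3 hB4), prod2_1⟩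
      · exact ⟨X 0 ^ 2 * X 1, hB5, prod3_1⟩
      · exact ⟨X 0 ^ 2 * X 1, hB5, prod4_1⟩
      · exact ⟨0, (Submodule.zero_mem M), prod5_1⟩
      · exact ⟨X 0 + X 1, (add_mem hB1 hB2), prod0_2⟩
      · exact ⟨X 0 ^ 2 + X 0 * X 1, (add_mem hB3 hB4), prod1_2⟩
      · exact ⟨X 0 ^ 2, hB3, prod2_2⟩
      · exact ⟨X 0 ^ 2 * X 1, hB5, prod3_2⟩
      · exact ⟨0, (Submodule.zero_mem M), prod4_2⟩
      · exact ⟨0, (Submodule.zero_mem M), prod5_2⟩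
  | zero => exact ⟨0, Submodule.zero_mem M, by simp⟩
  | add x y _ _ hx hy =>
      obtain ⟨m1, hm1, h1⟩ := hx
      obtain ⟨m2, hm2, h2⟩ := hy
      exact ⟨m1 + m2, add_mem hm1 hm2, by
        rw [show (x + y) * X i - (m1 + m2) = (x * X i - m1) + (y * X i - m2) from by ring]
        exact I.add_mem h1 h2⟩
  | smul a x _ hx =>
      obtain ⟨m', hm', h'⟩ := hx
      exact ⟨a • m', Submodule.smul_mem M a hm', by
        rw [smul_mul_assoc, ← smul_sub, smul_eq_C_mul]
        exact I.mul_mem_left _ h'⟩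

lemma decomp (p : P) : ∃ m ∈ M, p - m ∈ I := by
  induction p using MvPolynomial.induction_on with
  | C a =>
      refine ⟨C a, ?_, by rw [sub_self]; exact I.zero_mem⟩
      have : (C a : P) = a • 1 := by rw [smul_eq_C_mul, mul_one]
      rw [this]; exact Submodule.smul_mem M a hB0
  | add p q hp hq =>
      obtain ⟨m1, hm1, h1⟩ := hp
      obtain ⟨m2, hm2, h2⟩ := hq
      exact ⟨m1 + m2, add_mem hm1 hm2, by
        rw [show p + q - (m1 + m2) = (p - m1) + (q - m2) from by ring]
        exact I.add_mem h1 h2⟩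
  | mul_X p i hp =>
      obtain ⟨m, hm, h1⟩ := hp
      obtain ⟨m', hm', h2⟩ := mulX i m hm
      refine ⟨m', hm', ?_⟩
      rw [show p * X i - m' = (p - m) * X i + (m * X i - m') from by ring]
      exact I.add_mem (I.mul_mem_right _ h1) h2

lemma sgA0 : (t₁ * t₂) (0 : Fin 3) = 1 := rfl
lemma sgA1 : (t₁ * t₂) (1 : Fin 3) = 2 := rfl
lemma sgA2 : (t₁ * t₂) (2 : Fin 3) = 0 := rfl
lemma sgB0 : (t₂ * t₁) (0 : Fin 3) = 2 := rfl
lemma sgB1 : (t₂ * t₁) (1 : Fin 3) = 0 := rfl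
lemma sgB2 : (t₂ * t₁) (2 : Fin 3) = 1 := rfl
lemma sgC0 : t₂ (0 : Fin 3) = 0 := rfl
lemma sgC1 : t₂ (1 : Fin 3) = 2 := rfl
lemma sgC2 : t₂ (2 : Fin 3) = 1 := rfl
lemma sgD0 : (t₁ * t₂ * t₁) (0 : Fin 3) = 2 := rfl
lemma sgD1 : (t₁ * t₂ * t₁) (1 : Fin 3) = 1 := rfl
lemma sgD2 : (t₁ * t₂ * t₁) (2 : Fin 3) = 0 := rfl

lemma raw1_0 : T₁ ((1:P)) = (3) := by
  simp only [T₁, LinearMap.add_apply, L, AlgHom.toLinearMap_apply, map_mul, map_pow, map_one, rename_X, Equiv.Perm.coe_one, id_eq, sgA0, sgA1, sgA2, sgB0, sgB1, sgB2, sgC0, sgC1, sgC2, sgD0, sgD1, sgD2]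
  ring
lemma im1_0 : π (T₁ ((1:P))) = π ((1:P)) :=
  pi_eq (memI (0) (0) (0) (by rw [raw1_0]; linear_combination (1) * h2))

lemma raw1_1 : T₁ (X 0) = X 2 + X 1 + X 0 := by
  simp only [T₁, LinearMap.add_apply, L, AlgHom.toLinearMap_apply, map_mul, map_pow, map_one, rename_X, Equiv.Perm.coe_one, id_eq, sgA0, sgA1, sgA2, sgB0, sgB1, sgB2, sgC0, sgC1, sgC2, sgD0, sgD1, sgD2]
  ring
lemma im1_1 : π (T₁ (X 0)) = π ((0:P)) :=
  pi_eq (memI (1) (0) (0) (by rw [raw1_1]; linear_combination (0) * h2))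

lemma raw1_2 : T₁ (X 1) = X 2 + X 1 + X 0 := by
  simp only [T₁, LinearMap.add_apply, L, AlgHom.toLinearMap_apply, map_mul, map_pow, map_one, rename_X, Equiv.Perm.coe_one, id_eq, sgA0, sgA1, sgA2, sgB0, sgB1, sgB2, sgC0, sgC1, sgC2, sgD0, sgD1, sgD2]
  ring
lemma im1_2 : π (T₁ (X 1)) = π ((0:P)) :=
  pi_eq (memI (1) (0) (0) (by rw [raw1_2]; linear_combination (0) * h2))

lemma raw1_3 : T₁ (X 0 ^ 2) = X 2 ^ 2 + X 1 ^ 2 + X 0 ^ 2 := by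
  simp only [T₁, LinearMap.add_apply, L, AlgHom.toLinearMap_apply, map_mul, map_pow, map_one, rename_X, Equiv.Perm.coe_one, id_eq, sgA0, sgA1, sgA2, sgB0, sgB1, sgB2, sgC0, sgC1, sgC2, sgD0, sgD1, sgD2]
  ring
lemma im1_3 : π (T₁ (X 0 ^ 2)) = π ((0:P)) :=
  pi_eq (memI (X 2 + X 1 + X 0) (0) (0) (by rw [raw1_3]; linear_combination ((-1) * X 1 * X 2 + (-1) * X 0 * X 2 + (-1) * X 0 * X 1) * h2))

lemma raw1_4 : T₁ (X 0 * X 1) = X 1 * X 2 + X 0 * X 2 + X 0 * X 1 := by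
  simp only [T₁, LinearMap.add_apply, L, AlgHom.toLinearMap_apply, map_mul, map_pow, map_one, rename_X, Equiv.Perm.coe_one, id_eq, sgA0, sgA1, sgA2, sgB0, sgB1, sgB2, sgC0, sgC1, sgC2, sgD0, sgD1, sgD2]
  ring
lemma im1_4 : π (T₁ (X 0 * X 1)) = π ((0:P)) :=
  pi_eq (memI (0) (1) (0) (by rw [raw1_4]; linear_combination (0) * h2))

lemma raw1_5 : T₁ (X 0 ^ 2 * X 1) = X 1 ^ 2 * X 2 + X 0 * X 2 ^ 2 + X 0 ^ 2 * X 1 := by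
  simp only [T₁, LinearMap.add_apply, L, AlgHom.toLinearMap_apply, map_mul, map_pow, map_one, rename_X, Equiv.Perm.coe_one, id_eq, sgA0, sgA1, sgA2, sgB0, sgB1, sgB2, sgC0, sgC1, sgC2, sgD0, sgD1, sgD2]
  ring
lemma im1_5 : π (T₁ (X 0 ^ 2 * X 1)) = π (X 0 ^ 2 * X 1) :=
  pi_eq (memI (X 0 * X 2 + X 0 * X 1) (X 1 + X 0) (0) (by rw [raw1_5]; linear_combination ((-2) * X 0 * X 1 * X 2 + (-1) * X 0 * X 1 ^ 2 + (-1) * X 0 ^ 2 * X 2 + (-1) * X 0 ^ 2 * X 1) * h2))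

lemma raw2_0 : T₂ ((1:P)) = (4) := by
  simp only [T₂, LinearMap.add_apply, L, AlgHom.toLinearMap_apply, map_mul, map_pow, map_one, rename_X, Equiv.Perm.coe_one, id_eq, sgA0, sgA1, sgA2, sgB0, sgB1, sgB2, sgC0, sgC1, sgC2, sgD0, sgD1, sgD2]
  ring
lemma im2_0 : π (T₂ ((1:P))) = π ((0:P)) :=
  pi_eq (memI (0) (0) (0) (by rw [raw2_0]; linear_combination ((2)) * h2))

lemma raw2_1 : T₂ (X 0) = (2) * X 2 + (2) * X 0 := by
  simp only [T₂, LinearMap.add_apply, L, AlgHom.toLinearMap_apply, map_mul, map_pow, map_one, rename_X, Equiv.Perm.coe_one, id_eq, sgA0, sgA1, sgA2, sgB0, sgB1, sgB2, sgC0, sgC1, sgC2, sgD0, sgD1, sgD2]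
  ring
lemma im2_1 : π (T₂ (X 0)) = π ((0:P)) :=
  pi_eq (memI (0) (0) (0) (by rw [raw2_1]; linear_combination (X 2 + X 0) * h2))

lemma raw2_2 : T₂ (X 1) = X 2 + (2) * X 1 + X 0 := by
  simp only [T₂, LinearMap.add_apply, L, AlgHom.toLinearMap_apply, map_mul, map_pow, map_one, rename_X, Equiv.Perm.coe_one, id_eq, sgA0, sgA1, sgA2, sgB0, sgB1, sgB2, sgC0, sgC1, sgC2, sgD0, sgD1, sgD2]
  ring
lemma im2_2 : π (T₂ (X 1)) = π (X 1) :=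
  pi_eq (memI (1) (0) (0) (by rw [raw2_2]; linear_combination (0) * h2))

lemma raw2_3 : T₂ (X 0 ^ 2) = (2) * X 2 ^ 2 + (2) * X 0 ^ 2 := by
  simp only [T₂, LinearMap.add_apply, L, AlgHom.toLinearMap_apply, map_mul, map_pow, map_one, rename_X, Equiv.Perm.coe_one, id_eq, sgA0, sgA1, sgA2, sgB0, sgB1, sgB2, sgC0, sgC1, sgC2, sgD0, sgD1, sgD2]
  ring
lemma im2_3 : π (T₂ (X 0 ^ 2)) = π ((0:P)) :=
  pi_eq (memI (0) (0) (0) (by rw [raw2_3]; linear_combination (X 2 ^ 2 + X 0 ^ 2) * h2))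

lemma raw2_4 : T₂ (X 0 * X 1) = X 1 * X 2 + (2) * X 0 * X 2 + X 0 * X 1 := by
  simp only [T₂, LinearMap.add_apply, L, AlgHom.toLinearMap_apply, map_mul, map_pow, map_one, rename_X, Equiv.Perm.coe_one, id_eq, sgA0, sgA1, sgA2, sgB0, sgB1, sgB2, sgC0, sgC1, sgC2, sgD0, sgD1, sgD2]
  ring
lemma im2_4 : π (T₂ (X 0 * X 1)) = π (X 0 ^ 2 + X 0 * X 1) :=
  pi_eq (memI (X 0) (1) (0) (by rw [raw2_4]; linear_combination ((-1) * X 0 * X 1 + (-1) * X 0 ^ 2) * h2))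

lemma raw2_5 : T₂ (X 0 ^ 2 * X 1) = X 1 * X 2 ^ 2 + X 0 * X 2 ^ 2 + X 0 ^ 2 * X 2 + X 0 ^ 2 * X 1 := by
  simp only [T₂, LinearMap.add_apply, L, AlgHom.toLinearMap_apply, map_mul, map_pow, map_one, rename_X, Equiv.Perm.coe_one, id_eq, sgA0, sgA1, sgA2, sgB0, sgB1, sgB2, sgC0, sgC1, sgC2, sgD0, sgD1, sgD2]
  ring
lemma im2_5 : π (T₂ (X 0 ^ 2 * X 1)) = π ((0:P)) :=
  pi_eq (memI (X 1 * X 2 + X 0 * X 2 + X 0 * X 1) (X 1) (0) (by rw [raw2_5]; linear_combination ((-1) * X 1 ^ 2 * X 2 + (-2) * X 0 * X 1 * X 2 + (-1) * X 0 * X 1 ^ 2) * h2))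

lemma raw3_0 : T₃ ((1:P)) = (4) := by
  simp only [T₃, LinearMap.add_apply, L, AlgHom.toLinearMap_apply, map_mul, map_pow, map_one, rename_X, Equiv.Perm.coe_one, id_eq, sgA0, sgA1, sgA2, sgB0, sgB1, sgB2, sgC0, sgC1, sgC2, sgD0, sgD1, sgD2]
  ring
lemma im3_0 : π (T₃ ((1:P))) = π ((0:P)) :=
  pi_eq (memI (0) (0) (0) (by rw [raw3_0]; linear_combination ((2)) * h2))

lemma raw3_1 : T₃ (X 0) = X 2 + X 1 + (2) * X 0 := by
  simp only [T₃, LinearMap.add_apply, L, AlgHom.toLinearMap_apply, map_mul, map_pow, map_one, rename_X, Equiv.Perm.coe_one, id_eq, sgA0, sgA1, sgA2, sgB0, sgB1, sgB2, sgC0, sgC1, sgC2, sgD0, sgD1, sgD2]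
  ring
lemma im3_1 : π (T₃ (X 0)) = π (X 0) :=
  pi_eq (memI (1) (0) (0) (by rw [raw3_1]; linear_combination (0) * h2))

lemma raw3_2 : T₃ (X 1) = (2) * X 2 + (2) * X 1 := by
  simp only [T₃, LinearMap.add_apply, L, AlgHom.toLinearMap_apply, map_mul, map_pow, map_one, rename_X, Equiv.Perm.coe_one, id_eq, sgA0, sgA1, sgA2, sgB0, sgB1, sgB2, sgC0, sgC1, sgC2, sgD0, sgD1, sgD2]
  ring
lemma im3_2 : π (T₃ (X 1)) = π ((0:P)) :=
  pi_eq (memI (0) (0) (0) (by rw [raw3_2]; linear_combination (X 2 + X 1) * h2))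

lemma raw3_3 : T₃ (X 0 ^ 2) = X 2 ^ 2 + X 1 ^ 2 + (2) * X 0 ^ 2 := by
  simp only [T₃, LinearMap.add_apply, L, AlgHom.toLinearMap_apply, map_mul, map_pow, map_one, rename_X, Equiv.Perm.coe_one, id_eq, sgA0, sgA1, sgA2, sgB0, sgB1, sgB2, sgC0, sgC1, sgC2, sgD0, sgD1, sgD2]
  ring
lemma im3_3 : π (T₃ (X 0 ^ 2)) = π (X 0 ^ 2) :=
  pi_eq (memI (X 2 + X 1 + X 0) (0) (0) (by rw [raw3_3]; linear_combination ((-1) * X 1 * X 2 + (-1) * X 0 * X 2 + (-1) * X 0 * X 1) * h2))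

lemma raw3_4 : T₃ (X 0 * X 1) = (2) * X 1 * X 2 + X 0 * X 2 + X 0 * X 1 := by
  simp only [T₃, LinearMap.add_apply, L, AlgHom.toLinearMap_apply, map_mul, map_pow, map_one, rename_X, Equiv.Perm.coe_one, id_eq, sgA0, sgA1, sgA2, sgB0, sgB1, sgB2, sgC0, sgC1, sgC2, sgD0, sgD1, sgD2]
  ring
lemma im3_4 : π (T₃ (X 0 * X 1)) = π (X 0 ^ 2) :=
  pi_eq (memI (X 0) (0) (0) (by rw [raw3_4]; linear_combination (X 1 * X 2 + (-1) * X 0 ^ 2) * h2))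

lemma raw3_5 : T₃ (X 0 ^ 2 * X 1) = X 1 * X 2 ^ 2 + X 1 ^ 2 * X 2 + X 0 ^ 2 * X 2 + X 0 ^ 2 * X 1 := by
  simp only [T₃, LinearMap.add_apply, L, AlgHom.toLinearMap_apply, map_mul, map_pow, map_one, rename_X, Equiv.Perm.coe_one, id_eq, sgA0, sgA1, sgA2, sgB0, sgB1, sgB2, sgC0, sgC1, sgC2, sgD0, sgD1, sgD2]
  ring
lemma im3_5 : π (T₃ (X 0 ^ 2 * X 1)) = π ((0:P)) :=
  pi_eq (memI (X 1 * X 2) (X 0) (0) (by rw [raw3_5]; linear_combination ((-1) * X 0 * X 1 * X 2) * h2))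

lemma range1 : LinearMap.range (π ∘ₗ T₁) = Submodule.span k {π ((1:P)), π (X 0 ^ 2 * X 1)} := by
  apply le_antisymm
  · rintro r ⟨p, rfl⟩
    simp only [LinearMap.comp_apply]
    obtain ⟨m, hm, hpm⟩ := decomp p
    rw [pi_eq (show T₁ p - T₁ m ∈ I from by rw [← map_sub]; exact TI1 hpm)]
    clear hpm
    induction hm using Submodule.span_induction with
    | mem x hx =>
        simp only [Bset, Set.mem_insert_iff, Set.mem_singleton_iff] at hx
        rcases hx with rfl | rfl | rfl | rfl | rfl | rfl
        · rw [im1_0]; exact Submodule.subset_span (Set.mem_insert _ _)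
        · rw [im1_1, map_zero]; exact zero_mem _
        · rw [im1_2, map_zero]; exact zero_mem _
        · rw [im1_3, map_zero]; exact zero_mem _
        · rw [im1_4, map_zero]; exact zero_mem _
        · rw [im1_5]; exact Submodule.subset_span (Set.mem_insert_iff.2 (Or.inr rfl))
    | zero => rw [map_zero, map_zero]; exact zero_mem _
    | add x y _ _ hx hy => rw [map_add, map_add]; exact add_mem hx hy
    | smul a x _ hx => rw [map_smul, map_smul]; exact Submodule.smul_mem _ _ hx
  · rw [Submodule.span_le]
    rintro r hr
    simp only [Set.mem_insert_iff, Set.mem_singleton_iff] at hr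
    rcases hr with rfl | rfl
    · exact ⟨(1:P), by rw [LinearMap.comp_apply, im1_0]⟩
    · exact ⟨X 0 ^ 2 * X 1, by rw [LinearMap.comp_apply, im1_5]⟩

lemma range2 : LinearMap.range (π ∘ₗ T₂) = Submodule.span k {π (X 1), π (X 0 ^ 2 + X 0 * X 1)} := by
  apply le_antisymm
  · rintro r ⟨p, rfl⟩
    simp only [LinearMap.comp_apply]
    obtain ⟨m, hm, hpm⟩ := decomp p
    rw [pi_eq (show T₂ p - T₂ m ∈ I from by rw [← map_sub]; exact TI2 hpm)]
    clear hpm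
    induction hm using Submodule.span_induction with
    | mem x hx =>
        simp only [Bset, Set.mem_insert_iff, Set.mem_singleton_iff] at hx
        rcases hx with rfl | rfl | rfl | rfl | rfl | rfl
        · rw [im2_0, map_zero]; exact zero_mem _
        · rw [im2_1, map_zero]; exact zero_mem _
        · rw [im2_2]; exact Submodule.subset_span (Set.mem_insert _ _)
        · rw [im2_3, map_zero]; exact zero_mem _
        · rw [im2_4]; exact Submodule.subset_span (Set.mem_insert_iff.2 (Or.inr rfl))
        · rw [im2_5, map_zero]; exact zero_mem _
    | zero => rw [map_zero, map_zero]; exact zero_mem _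
    | add x y _ _ hx hy => rw [map_add, map_add]; exact add_mem hx hy
    | smul a x _ hx => rw [map_smul, map_smul]; exact Submodule.smul_mem _ _ hx
  · rw [Submodule.span_le]
    rintro r hr
    simp only [Set.mem_insert_iff, Set.mem_singleton_iff] at hr
    rcases hr with rfl | rfl
    · exact ⟨X 1, by rw [LinearMap.comp_apply, im2_2]⟩
    · exact ⟨X 0 * X 1, by rw [LinearMap.comp_apply, im2_4]⟩

lemma range3 : LinearMap.range (π ∘ₗ T₃) = Submodule.span k {π (X 0), π (X 0 ^ 2)} := by
  apply le_antisymm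
  · rintro r ⟨p, rfl⟩
    simp only [LinearMap.comp_apply]
    obtain ⟨m, hm, hpm⟩ := decomp p
    rw [pi_eq (show T₃ p - T₃ m ∈ I from by rw [← map_sub]; exact TI3 hpm)]
    clear hpm
    induction hm using Submodule.span_induction with
    | mem x hx =>
        simp only [Bset, Set.mem_insert_iff, Set.mem_singleton_iff] at hx
        rcases hx with rfl | rfl | rfl | rfl | rfl | rfl
        · rw [im3_0, map_zero]; exact zero_mem _
        · rw [im3_1]; exact Submodule.subset_span (Set.mem_insert _ _)
        · rw [im3_2, map_zero]; exact zero_mem _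
        · rw [im3_3]; exact Submodule.subset_span (Set.mem_insert_iff.2 (Or.inr rfl))
        · rw [im3_4]; exact Submodule.subset_span (Set.mem_insert_iff.2 (Or.inr rfl))
        · rw [im3_5, map_zero]; exact zero_mem _
    | zero => rw [map_zero, map_zero]; exact zero_mem _
    | add x y _ _ hx hy => rw [map_add, map_add]; exact add_mem hx hy
    | smul a x _ hx => rw [map_smul, map_smul]; exact Submodule.smul_mem _ _ hx
  · rw [Submodule.span_le]
    rintro r hr
    simp only [Set.mem_insert_iff, Set.mem_singleton_iff] at hr
    rcases hr with rfl | rfl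
    · exact ⟨X 0, by rw [LinearMap.comp_apply, im3_1]⟩
    · exact ⟨X 0 ^ 2, by rw [LinearMap.comp_apply, im3_3]⟩

/-- The ranges of the endomorphisms of `R` induced by `T₁`, `T₂`, `T₃`
(since the quotient map `π` is surjective and each `Tᵢ` descends to `R`, the range
of the induced endomorphism of `R` is exactly the range of `π ∘ Tᵢ : P → R`). -/
theorem range_induced_idempotents :
    LinearMap.range (π ∘ₗ T₁) = Submodule.span k {π 1, π (x₁ ^ 2 * x₂)} ∧
    LinearMap.range (π ∘ₗ T₂) = Submodule.span k {π x₂, π (x₁ ^ 2 + x₁ * x₂)} ∧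
    LinearMap.range (π ∘ₗ T₃) = Submodule.span k {π x₁, π (x₁ ^ 2)} := by
  simp only [x₁, x₂]
  exact ⟨range1, range2, range3⟩

end

end Stmt2
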